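/- Let $N\ge3$ and $0<\gamma<\beta$, and let $\rho:[0,\infty)\to[0,\infty)$ be measurable with $(1+s)^{\gamma}\le\rho(s)\le(1+s)^{\beta}$ for all $s\ge0$. Define $S_{\rho}=\inf\Big\{\int_{\mathbb{R}^N_+}\rho(x_N)|\nabla u|^2\,dx\ :\ u\in C_c^\infty(\mathbb{R}^N),\ \int_{\mathbb{R}^{N-1}}|u(x',0)|^{2_*}\,dx'=1\Big\}$ and $S_{\partial}=\inf\Big\{\int_{\mathbb{R}^N_+}|\nabla u|^2\,dx\ :\ u\in C_c^\infty(\mathbb{R}^N),\ \int_{\mathbb{R}^{N-1}}|u(x',0)|^{2_*}\,dx'=1\Big\}$. Then $S_{\rho}=S_{\partial}$. -/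

import Mathlib

open MeasureTheory Filter Metric
open scoped Topology ENNReal Pointwise

noncomputable section

/-- The last coordinate of a point of `ℝ^N`. -/
def xN (N : ℕ) (hN : 0 < N) (x : EuclideanSpace ℝ (Fin N)) : ℝ :=
  x ⟨N - 1, Nat.sub_lt hN Nat.one_pos⟩

/-- The open upper half-space `ℝ^N₊`. -/
def Hplus (N : ℕ) (hN : 0 < N) : Set (EuclideanSpace ℝ (Fin N)) :=
  {x | 0 < xN N hN x}

/-- The point `(y, t) ∈ ℝ^N` with horizontal part `y ∈ ℝ^(N-1)` and last coordinate `t`. -/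
def mkPt (N : ℕ) (y : EuclideanSpace ℝ (Fin (N - 1))) (t : ℝ) :
    EuclideanSpace ℝ (Fin N) :=
  (WithLp.equiv 2 (Fin N → ℝ)).symm fun i => if h : (i : ℕ) < N - 1 then y ⟨(i : ℕ), h⟩ else t

/-- The boundary point `(y, 0)`. -/
def bPt (N : ℕ) (y : EuclideanSpace ℝ (Fin (N - 1))) : EuclideanSpace ℝ (Fin N) :=
  mkPt N y 0

/-- Partial derivative of `u` in the `i`-th coordinate direction. -/
def pd (N : ℕ) (u : EuclideanSpace ℝ (Fin N) → ℝ) (i : Fin N)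
    (x : EuclideanSpace ℝ (Fin N)) : ℝ :=
  fderiv ℝ u x (EuclideanSpace.single i 1)

/-- `div (w ∇u)` written as a sum of coordinate partial derivatives. -/
def divW (N : ℕ) (w u : EuclideanSpace ℝ (Fin N) → ℝ)
    (x : EuclideanSpace ℝ (Fin N)) : ℝ :=
  ∑ i, pd N (fun z => w z * pd N u i z) i x

/-! ### Auxiliary lemmas -/

section Aux

variable {N : ℕ}

lemma xN_smul (hN : 0 < N) (r : ℝ) (x : EuclideanSpace ℝ (Fin N)) :
    xN N hN (r • x) = r * xN N hN x := rfl

lemma xN_le_norm (hN : 0 < N) (x : EuclideanSpace ℝ (Fin N)) : xN N hN x ≤ ‖x‖ := by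
  refine le_trans (le_abs_self _) ?_
  rw [EuclideanSpace.norm_eq]
  rw [show |xN N hN x| = Real.sqrt ((xN N hN x)^2) by rw [Real.sqrt_sq_eq_abs]]
  apply Real.sqrt_le_sqrt
  rw [xN]
  simp only [Real.norm_eq_abs, sq_abs]
  exact Finset.single_le_sum (f := fun i => (x i)^2) (fun i _ => sq_nonneg _) (Finset.mem_univ _)

lemma xN_continuous (hN : 0 < N) : Continuous (xN N hN) :=
  (EuclideanSpace.proj (𝕜 := ℝ) (⟨N - 1, Nat.sub_lt hN Nat.one_pos⟩ : Fin N)).continuous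

lemma Hplus_measurable (hN : 0 < N) : MeasurableSet (Hplus N hN) :=
  (isOpen_lt continuous_const (xN_continuous hN)).measurableSet

lemma smul_Hplus (hN : 0 < N) {r : ℝ} (hr : 0 < r) : r • Hplus N hN = Hplus N hN := by
  ext x
  constructor
  · rintro ⟨y, hy, rfl⟩
    simpa [Hplus, xN_smul] using mul_pos hr hy
  · intro hx
    refine ⟨r⁻¹ • x, ?_, by simp [smul_smul, mul_inv_cancel₀ hr.ne']⟩
    simpa [Hplus, xN_smul] using mul_pos (inv_pos.2 hr) hx

lemma bPt_smul (r : ℝ) (y : EuclideanSpace ℝ (Fin (N-1))) : bPt N (r • y) = r • bPt N y := by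
  ext i
  simp only [bPt, mkPt, WithLp.equiv_symm_apply, PiLp.toLp_apply, PiLp.smul_apply, smul_eq_mul]
  split <;> simp

lemma bPt_continuous : Continuous (bPt N) := by
  unfold bPt mkPt
  refine Continuous.comp ?_ ?_
  · exact (PiLp.continuous_toLp 2 (fun _ : Fin N => ℝ))
  · refine continuous_pi fun i => ?_
    by_cases h : (i : ℕ) < N - 1
    · simpa [h] using (EuclideanSpace.proj (𝕜 := ℝ) (⟨(i : ℕ), h⟩ : Fin (N-1))).continuous
    · simpa [h] using continuous_const

lemma norm_le_norm_bPt (y : EuclideanSpace ℝ (Fin (N - 1))) : ‖y‖ ≤ ‖bPt N y‖ := by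
  rw [EuclideanSpace.norm_eq, EuclideanSpace.norm_eq]
  apply Real.sqrt_le_sqrt
  have : ∑ j : Fin (N-1), ‖y j‖ ^ 2
      = ∑ i ∈ Finset.univ.image
          (fun j : Fin (N-1) => (⟨(j:ℕ), lt_of_lt_of_le j.2 (Nat.sub_le N 1)⟩ : Fin N)),
          ‖bPt N y i‖ ^ 2 := by
    rw [Finset.sum_image]
    · refine Finset.sum_congr rfl fun j _ => ?_
      simp [bPt, mkPt, j.2]
    · intro a _ b _ hab
      exact Fin.val_injective (by simpa using hab)
  rw [this]
  exact Finset.sum_le_sum_of_subset_of_nonneg (Finset.subset_univ _) (fun _ _ _ => by positivity)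

lemma bPt_zero : bPt N 0 = 0 := by
  ext i
  simp [bPt, mkPt]

variable {E : Type*} [NormedAddCommGroup E] [InnerProductSpace ℝ E] [CompleteSpace E]

lemma norm_gradient_eq (f : E → ℝ) (x : E) : ‖gradient f x‖ = ‖fderiv ℝ f x‖ := by
  rw [gradient]; exact LinearIsometryEquiv.norm_map _ _

lemma gradient_zero_of_not_mem (f : E → ℝ) {x : E} (hx : x ∉ tsupport f) :
    gradient f x = 0 := by
  have : fderiv ℝ f x = 0 := by
    by_contra h
    exact hx (support_fderiv_subset ℝ (Function.mem_support.2 h))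
  rw [gradient, this, map_zero]

lemma gradient_scale (u : E → ℝ) (hu : Differentiable ℝ u) (c r : ℝ) (x : E) :
    gradient (fun z => c * u (r • z)) x = (c * r) • gradient u (r • x) := by
  have h1 : HasFDerivAt (fun z : E => r • z) (r • ContinuousLinearMap.id ℝ E) x := by
    exact ((r • ContinuousLinearMap.id ℝ E).hasFDerivAt (x := x))
  have h2 : HasFDerivAt u (fderiv ℝ u (r • x)) (r • x) := (hu (r • x)).hasFDerivAt
  have h4 : HasFDerivAt (fun z : E => c * u (r • z))
      (c • ((fderiv ℝ u (r • x)).comp (r • ContinuousLinearMap.id ℝ E))) x :=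
    (h2.comp x h1).const_mul c
  have h5 : c • ((fderiv ℝ u (r • x)).comp (r • ContinuousLinearMap.id ℝ E))
      = (c * r) • fderiv ℝ u (r • x) := by
    ext w
    simp [mul_comm, mul_assoc, mul_left_comm]
  rw [gradient, (h4.congr_fderiv h5).fderiv, _root_.map_smul]
  rfl

lemma grad_sq_continuous (u : E → ℝ) (hu : ContDiff ℝ (⊤ : ℕ∞) u) :
    Continuous fun x => ‖gradient u x‖ ^ 2 := by
  have h1 : Continuous (fderiv ℝ u) := hu.continuous_fderiv (by simp)
  have h2 : (fun x => ‖gradient u x‖ ^ 2) = fun x => ‖fderiv ℝ u x‖ ^ 2 :=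
    funext fun x => by rw [norm_gradient_eq]
  rw [h2]
  exact (h1.norm).pow 2

lemma grad_sq_hcs (u : E → ℝ) (hcs : HasCompactSupport u) :
    HasCompactSupport fun x => ‖gradient u x‖ ^ 2 := by
  apply HasCompactSupport.intro hcs
  intro x hx
  rw [gradient_zero_of_not_mem u hx]
  simp

end Aux

section Admissible

lemma exists_admissible (N : ℕ) (hN3 : 3 ≤ N) :
    ∃ u : EuclideanSpace ℝ (Fin N) → ℝ, ContDiff ℝ (⊤:ℕ∞) u ∧ HasCompactSupport u ∧
      (∫ y : EuclideanSpace ℝ (Fin (N-1)), |u (bPt N y)| ^ (2*((N:ℝ)-1)/((N:ℝ)-2))) = 1 := by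
  set p : ℝ := 2*((N:ℝ)-1)/((N:ℝ)-2) with hp_def
  have hN2 : (2:ℝ) < (N:ℝ) := by exact_mod_cast by omega
  have hp : 0 < p := by
    apply div_pos <;> nlinarith
  obtain ⟨f, hf_sm, hf_cs, hf0, hf_nn⟩ :
      ∃ f : EuclideanSpace ℝ (Fin N) → ℝ, ContDiff ℝ (⊤ : ℕ∞) f ∧ HasCompactSupport f ∧
        f 0 = 1 ∧ ∀ x, 0 ≤ f x := by
    have f : ContDiffBump (0 : EuclideanSpace ℝ (Fin N)) := ⟨1, 2, one_pos, one_lt_two⟩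
    exact ⟨f, f.contDiff, f.hasCompactSupport,
      f.one_of_mem_closedBall (by simpa using f.rIn_pos.le), fun x => f.nonneg⟩
  set g : EuclideanSpace ℝ (Fin (N-1)) → ℝ := fun y => f (bPt N y) with hg_def
  have hg_cont : Continuous g := hf_sm.continuous.comp bPt_continuous
  have hg_cs : HasCompactSupport g := by
    obtain ⟨R, hR⟩ := hf_cs.isBounded.subset_closedBall 0
    apply HasCompactSupport.intro (isCompact_closedBall (0 : EuclideanSpace ℝ (Fin (N-1))) R)
    intro y hy
    by_contra h
    have : bPt N y ∈ tsupport f := subset_tsupport f h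
    have h1 : ‖bPt N y‖ ≤ R := by simpa [Metric.mem_closedBall, dist_eq_norm] using hR this
    exact hy (by simpa [Metric.mem_closedBall, dist_eq_norm] using (norm_le_norm_bPt y).trans h1)
  set G : EuclideanSpace ℝ (Fin (N-1)) → ℝ := fun y => |g y| ^ p with hG_def
  have hG_cont : Continuous G :=
    (hg_cont.abs).rpow_const (fun y => Or.inr hp.le)
  have hG_cs : HasCompactSupport G :=
    hg_cs.comp_left (g := fun t : ℝ => |t| ^ p) (by simp [Real.zero_rpow hp.ne'])
  have hG_int : Integrable G := hG_cont.integrable_of_hasCompactSupport hG_cs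
  have hG_nn : 0 ≤ G := fun y => Real.rpow_nonneg (abs_nonneg _) _
  set I : ℝ := ∫ y, G y with hI_def
  have hI : 0 < I := by
    refine integral_pos_of_integrable_nonneg_nonzero hG_cont hG_int hG_nn (x := 0) ?_
    have : G 0 = 1 := by simp [hG_def, hg_def, bPt_zero, hf0, Real.one_rpow]
    rw [this]; exact one_ne_zero
  refine ⟨fun x => I ^ (-p⁻¹) * f x, contDiff_const.mul hf_sm, ?_, ?_⟩
  · exact hf_cs.mul_left
  · have ht : 0 < I ^ (-p⁻¹) := Real.rpow_pos_of_pos hI _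
    have heq : ∀ y, |I ^ (-p⁻¹) * f (bPt N y)| ^ p = (I ^ (-p⁻¹)) ^ p * G y := by
      intro y
      rw [hG_def, abs_mul, Real.mul_rpow (abs_nonneg _) (abs_nonneg _), abs_of_pos ht]
    simp only [heq]
    rw [integral_const_mul, ← hI_def, ← Real.rpow_mul hI.le,
      neg_mul, inv_mul_cancel₀ hp.ne', Real.rpow_neg_one, inv_mul_cancel₀ hI.ne']

end Admissible

section Energy

variable {N : ℕ}

lemma energy_bound (hN : 0 < N) (ρ : ℝ → ℝ) (hρm : Measurable ρ) (β : ℝ) (hβ : 0 ≤ β)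
    (hρub : ∀ s : ℝ, 0 ≤ s → ρ s ≤ (1+s) ^ β) (hρnn : ∀ s : ℝ, 0 ≤ s → 0 ≤ ρ s)
    (u : EuclideanSpace ℝ (Fin N) → ℝ) (hu : ContDiff ℝ (⊤:ℕ∞) u) (hcs : HasCompactSupport u)
    (r M : ℝ) (hr : 0 < r) (hM : 0 ≤ M) (hsup : tsupport u ⊆ closedBall 0 M) :
    IntegrableOn (fun z => ρ (xN N hN z / r) * ‖gradient u z‖ ^ 2) (Hplus N hN) volume ∧
    (∫ z in Hplus N hN, ρ (xN N hN z / r) * ‖gradient u z‖ ^ 2)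
      ≤ (1 + M/r) ^ β * ∫ z in Hplus N hN, ‖gradient u z‖ ^ 2 := by
  set C : ℝ := (1 + M/r) ^ β with hC_def
  have hC : 0 ≤ C := Real.rpow_nonneg (by positivity) β
  have hgi : Integrable (fun z => ‖gradient u z‖ ^ 2) :=
    (grad_sq_continuous u hu).integrable_of_hasCompactSupport (grad_sq_hcs u hcs)
  have hbd : ∀ z ∈ Hplus N hN, ρ (xN N hN z / r) * ‖gradient u z‖ ^ 2
      ≤ C * ‖gradient u z‖ ^ 2 := by
    intro z hz
    by_cases hg : gradient u z = 0
    · simp [hg]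
    · have hz' : z ∈ tsupport u := by
        by_contra h
        exact hg (gradient_zero_of_not_mem u h)
      have hzn : ‖z‖ ≤ M := by
        simpa [Metric.mem_closedBall, dist_eq_norm] using hsup hz'
      have hxz : 0 < xN N hN z := hz
      have h1 : ρ (xN N hN z / r) ≤ (1 + xN N hN z / r) ^ β :=
        hρub _ (by positivity)
      have h2 : (1 + xN N hN z / r) ^ β ≤ C := by
        apply Real.rpow_le_rpow (by positivity) _ hβ
        have : xN N hN z ≤ M := le_trans (xN_le_norm hN z) hzn
        gcongr
      exact mul_le_mul_of_nonneg_right (h1.trans h2) (by positivity)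
  have hnn : ∀ z ∈ Hplus N hN, 0 ≤ ρ (xN N hN z / r) * ‖gradient u z‖ ^ 2 := by
    intro z hz
    have hxz : 0 < xN N hN z := hz
    exact mul_nonneg (hρnn _ (by positivity)) (by positivity)
  have hmeas : AEStronglyMeasurable (fun z => ρ (xN N hN z / r) * ‖gradient u z‖ ^ 2)
      (volume.restrict (Hplus N hN)) := by
    apply Measurable.aestronglyMeasurable
    exact ((hρm.comp (((xN_continuous hN).measurable).div_const r)).mul
      ((grad_sq_continuous u hu).measurable))
  have hint : IntegrableOn (fun z => ρ (xN N hN z / r) * ‖gradient u z‖ ^ 2)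
      (Hplus N hN) volume := by
    refine Integrable.mono' ((hgi.const_mul C).integrableOn) hmeas ?_
    rw [ae_restrict_iff' (Hplus_measurable hN)]
    filter_upwards with z hz
    rw [Real.norm_eq_abs, abs_of_nonneg (hnn z hz)]
    exact hbd z hz
  refine ⟨hint, ?_⟩
  calc (∫ z in Hplus N hN, ρ (xN N hN z / r) * ‖gradient u z‖ ^ 2)
      ≤ ∫ z in Hplus N hN, C * ‖gradient u z‖ ^ 2 :=
        setIntegral_mono_on hint ((hgi.const_mul C).integrableOn) (Hplus_measurable hN) hbd
    _ = C * ∫ z in Hplus N hN, ‖gradient u z‖ ^ 2 := integral_const_mul C _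

lemma trace_scale (hN3 : 3 ≤ N) (u : EuclideanSpace ℝ (Fin N) → ℝ) {r : ℝ} (hr : 0 < r) :
    (∫ y : EuclideanSpace ℝ (Fin (N-1)),
        |(fun x => r ^ (((N:ℝ)-2)/2) * u (r • x)) (bPt N y)| ^ (2*((N:ℝ)-1)/((N:ℝ)-2)))
    = ∫ y : EuclideanSpace ℝ (Fin (N-1)), |u (bPt N y)| ^ (2*((N:ℝ)-1)/((N:ℝ)-2)) := by
  set p : ℝ := 2*((N:ℝ)-1)/((N:ℝ)-2) with hp_def
  set c : ℝ := r ^ (((N:ℝ)-2)/2) with hc_def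
  have hN2 : (2:ℝ) < (N:ℝ) := by exact_mod_cast by omega
  have hc : 0 < c := Real.rpow_pos_of_pos hr _
  have heq : ∀ y : EuclideanSpace ℝ (Fin (N-1)),
      |(fun x => c * u (r • x)) (bPt N y)| ^ p
        = c ^ p * ((fun y => |u (bPt N y)| ^ p) (r • y)) := by
    intro y
    simp only
    rw [← bPt_smul, abs_mul, Real.mul_rpow (abs_nonneg _) (abs_nonneg _), abs_of_pos hc]
  simp only [heq]
  rw [integral_const_mul, Measure.integral_comp_smul volume (fun y => |u (bPt N y)| ^ p) r,
    finrank_euclideanSpace_fin]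
  rw [smul_eq_mul, ← mul_assoc]
  have hconst : c ^ p * |((r:ℝ) ^ (N - 1 : ℕ))⁻¹| = 1 := by
    have h1 : c ^ p = r ^ ((N:ℝ) - 1) := by
      rw [hc_def, ← Real.rpow_mul hr.le]
      congr 1
      have h2ne : (2 * ((N:ℝ)-2)) ≠ 0 := by nlinarith
      rw [hp_def, div_mul_div_comm,
        show ((N:ℝ)-2) * (2*((N:ℝ)-1)) = (2 * ((N:ℝ)-2)) * ((N:ℝ)-1) by ring,
        mul_div_cancel_left₀ _ h2ne]
    have h2 : ((r:ℝ) ^ (N - 1 : ℕ)) = r ^ ((N:ℝ) - 1) := by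
      rw [← Real.rpow_natCast r (N-1)]
      congr 1
      have : (1:ℕ) ≤ N := by omega
      push_cast [this]
      ring
    rw [h1, h2, abs_of_nonneg (inv_nonneg.2 (Real.rpow_nonneg hr.le _)),
      ← Real.rpow_neg hr.le, ← Real.rpow_add hr]
    simp
  rw [hconst, one_mul]

lemma energy_scale (hN3 : 3 ≤ N) (hN : 0 < N) (ρ : ℝ → ℝ)
    (u : EuclideanSpace ℝ (Fin N) → ℝ) (hu : ContDiff ℝ (⊤:ℕ∞) u) {r : ℝ} (hr : 0 < r) :
    (∫ x in Hplus N hN,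
        ρ (xN N hN x) * ‖gradient (fun z => r ^ (((N:ℝ)-2)/2) * u (r • z)) x‖ ^ 2)
    = ∫ z in Hplus N hN, ρ (xN N hN z / r) * ‖gradient u z‖ ^ 2 := by
  set c : ℝ := r ^ (((N:ℝ)-2)/2) with hc_def
  have hN2 : (2:ℝ) < (N:ℝ) := by exact_mod_cast by omega
  have hc : 0 < c := Real.rpow_pos_of_pos hr _
  set g : EuclideanSpace ℝ (Fin N) → ℝ := fun z => ρ (xN N hN z / r) * ‖gradient u z‖ ^ 2
    with hg_def
  have heq : ∀ x, ρ (xN N hN x) * ‖gradient (fun z => c * u (r • z)) x‖ ^ 2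
      = (c * r) ^ 2 * g (r • x) := by
    intro x
    rw [gradient_scale u (hu.differentiable (by simp)) c r x]
    rw [hg_def]
    simp only
    rw [xN_smul, mul_div_cancel_left₀ _ hr.ne', norm_smul]
    rw [Real.norm_eq_abs, mul_pow, sq_abs]
    ring
  calc (∫ x in Hplus N hN, ρ (xN N hN x) * ‖gradient (fun z => c * u (r • z)) x‖ ^ 2)
      = ∫ x in Hplus N hN, (c * r) ^ 2 * g (r • x) := by
        exact integral_congr_ae (Eventually.of_forall (fun x => heq x))
    _ = (c * r) ^ 2 * ∫ x in Hplus N hN, g (r • x) := integral_const_mul _ _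
    _ = (c * r) ^ 2 * (|((r:ℝ) ^ N)⁻¹| • ∫ x in r • Hplus N hN, g x) := by
        rw [Measure.setIntegral_comp_smul volume g (Hplus N hN) hr.ne', finrank_euclideanSpace_fin]
    _ = ((c * r) ^ 2 * |((r:ℝ) ^ N)⁻¹|) * ∫ x in Hplus N hN, g x := by
        rw [smul_Hplus hN hr, smul_eq_mul, mul_assoc]
    _ = ∫ x in Hplus N hN, g x := by
        have hconst : (c * r) ^ 2 * |((r:ℝ) ^ N)⁻¹| = 1 := by
          have h1 : (c * r) ^ 2 = r ^ ((N:ℝ)) := by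
            rw [mul_pow, hc_def, ← Real.rpow_natCast (r ^ (((N:ℝ)-2)/2)) 2,
              ← Real.rpow_mul hr.le, ← Real.rpow_natCast r 2, ← Real.rpow_add hr]
            congr 1
            have hne : (N:ℝ) - 2 ≠ 0 := by linarith
            push_cast
            field_simp
            ring
          have h2 : ((r:ℝ) ^ N) = r ^ ((N:ℝ)) := by
            rw [← Real.rpow_natCast r N]
          rw [h1, h2, abs_of_nonneg (inv_nonneg.2 (Real.rpow_nonneg hr.le _)),
            mul_inv_cancel₀ (Real.rpow_pos_of_pos hr _).ne']
        rw [hconst, one_mul]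

end Energy

theorem stmt3 (N : ℕ) (hN : 3 ≤ N) (γ β : ℝ) (hγ : 0 < γ) (hβ : γ < β)
    (ρ : ℝ → ℝ) (hρm : Measurable ρ)
    (hρ : ∀ s : ℝ, 0 ≤ s → (1 + s) ^ γ ≤ ρ s ∧ ρ s ≤ (1 + s) ^ β) :
    sInf {E : ℝ | ∃ u : EuclideanSpace ℝ (Fin N) → ℝ,
        ContDiff ℝ (⊤ : ℕ∞) u ∧ HasCompactSupport u ∧
        (∫ y : EuclideanSpace ℝ (Fin (N - 1)),
            |u (bPt N y)| ^ (2 * ((N : ℝ) - 1) / ((N : ℝ) - 2))) = 1 ∧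
        E = ∫ x in Hplus N (by omega),
          ρ (xN N (by omega) x) * ‖gradient u x‖ ^ 2} =
    sInf {E : ℝ | ∃ u : EuclideanSpace ℝ (Fin N) → ℝ,
        ContDiff ℝ (⊤ : ℕ∞) u ∧ HasCompactSupport u ∧
        (∫ y : EuclideanSpace ℝ (Fin (N - 1)),
            |u (bPt N y)| ^ (2 * ((N : ℝ) - 1) / ((N : ℝ) - 2))) = 1 ∧
        E = ∫ x in Hplus N (by omega), ‖gradient u x‖ ^ 2} := by
  have h0 : 0 < N := by omega
  have hβ0 : 0 < β := hγ.trans hβ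
  have hρ_nn : ∀ s : ℝ, 0 ≤ s → 0 ≤ ρ s := fun s hs =>
    le_trans (Real.rpow_nonneg (by linarith) γ) (hρ s hs).1
  have hρ_ge1 : ∀ s : ℝ, 0 ≤ s → 1 ≤ ρ s := by
    intro s hs
    refine le_trans ?_ (hρ s hs).1
    calc (1:ℝ) = 1 ^ γ := (Real.one_rpow γ).symm
      _ ≤ (1+s) ^ γ := Real.rpow_le_rpow zero_le_one (by linarith) hγ.le
  obtain ⟨u₀, hu₀s, hu₀c, hu₀t⟩ := exists_admissible N hN
  apply le_antisymm
  · -- sInf S_ρ ≤ sInf S_1 (scaling)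
    refine le_csInf ⟨_, u₀, hu₀s, hu₀c, hu₀t, rfl⟩ ?_
    rintro b ⟨u, hus, huc, hut, rfl⟩
    obtain ⟨M₀, hM₀⟩ := huc.isBounded.subset_closedBall 0
    set M := max M₀ 0 with hM_def
    have hM : 0 ≤ M := le_max_right _ _
    have hsup : tsupport u ⊆ closedBall 0 M :=
      hM₀.trans (closedBall_subset_closedBall (le_max_left _ _))
    have htend : Tendsto (fun r : ℝ => (1 + M/r) ^ β * ∫ x in Hplus N h0, ‖gradient u x‖ ^ 2)
        atTop (𝓝 (∫ x in Hplus N h0, ‖gradient u x‖ ^ 2)) := by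
      have htop : Tendsto (fun r : ℝ => 1 + M / r) atTop (𝓝 1) := by
        have h1 : Tendsto (fun r : ℝ => M / r) atTop (𝓝 0) :=
          tendsto_const_nhds.div_atTop tendsto_id
        simpa using tendsto_const_nhds.add h1
      have hrpow : Tendsto (fun r : ℝ => (1 + M/r) ^ β) atTop (𝓝 1) := by
        have hc : ContinuousAt (fun t : ℝ => t ^ β) 1 :=
          Real.continuousAt_rpow_const 1 β (Or.inr hβ0.le)
        have := hc.tendsto.comp htop
        simpa [Function.comp_def, Real.one_rpow] using this
      simpa using hrpow.mul_const (∫ x in Hplus N h0, ‖gradient u x‖ ^ 2)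
    refine ge_of_tendsto htend ?_
    filter_upwards [eventually_ge_atTop (1:ℝ)] with r hr1
    have hr : 0 < r := lt_of_lt_of_le one_pos hr1
    have hvs : ContDiff ℝ (⊤:ℕ∞) (fun z => r ^ (((N:ℝ)-2)/2) * u (r • z)) :=
      contDiff_const.mul (hus.comp (contDiff_const_smul r))
    have hvc : HasCompactSupport (fun z => r ^ (((N:ℝ)-2)/2) * u (r • z)) := by
      apply HasCompactSupport.intro (isCompact_closedBall (0:EuclideanSpace ℝ (Fin N)) (M/r))
      intro x hx
      have hu0 : u (r • x) = 0 := by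
        by_contra h
        have hmem := hsup (subset_tsupport u h)
        rw [mem_closedBall, dist_zero_right, norm_smul, Real.norm_eq_abs,
          abs_of_pos hr] at hmem
        apply hx
        rw [mem_closedBall, dist_zero_right]
        rw [le_div_iff₀ hr]
        linarith [hmem]
      rw [hu0, mul_zero]
    have hvt : (∫ y : EuclideanSpace ℝ (Fin (N - 1)),
        |(fun z => r ^ (((N:ℝ)-2)/2) * u (r • z)) (bPt N y)| ^
          (2 * ((N : ℝ) - 1) / ((N : ℝ) - 2))) = 1 := by
      rw [trace_scale hN u hr]; exact hut
    refine le_trans (csInf_le ⟨0, ?_⟩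
      ⟨fun z => r ^ (((N:ℝ)-2)/2) * u (r • z), hvs, hvc, hvt, rfl⟩) ?_
    · rintro a ⟨w, -, -, -, rfl⟩
      refine setIntegral_nonneg (Hplus_measurable h0) fun x hx => ?_
      have hx' : 0 < xN N h0 x := hx
      exact mul_nonneg (hρ_nn _ hx'.le) (by positivity)
    · rw [energy_scale hN h0 ρ u hus hr]
      exact (energy_bound h0 ρ hρm β hβ0.le (fun s hs => (hρ s hs).2) hρ_nn
        u hus huc r M hr hM hsup).2
  · -- sInf S_1 ≤ sInf S_ρ
    refine le_csInf ⟨_, u₀, hu₀s, hu₀c, hu₀t, rfl⟩ ?_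
    rintro a ⟨u, hus, huc, hut, rfl⟩
    refine le_trans (csInf_le ⟨0, ?_⟩ ⟨u, hus, huc, hut, rfl⟩) ?_
    · rintro a ⟨w, -, -, -, rfl⟩
      exact setIntegral_nonneg (Hplus_measurable h0) fun x _ => by positivity
    · obtain ⟨M₀, hM₀⟩ := huc.isBounded.subset_closedBall 0
      set M := max M₀ 0 with hM_def
      have hM : 0 ≤ M := le_max_right _ _
      have hsup : tsupport u ⊆ closedBall 0 M :=
        hM₀.trans (closedBall_subset_closedBall (le_max_left _ _))
      have hint := (energy_bound h0 ρ hρm β hβ0.le (fun s hs => (hρ s hs).2) hρ_nn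
        u hus huc 1 M one_pos hM hsup).1
      simp only [div_one] at hint
      have hgi : IntegrableOn (fun z => ‖gradient u z‖ ^ 2) (Hplus N h0) volume :=
        ((grad_sq_continuous u hus).integrable_of_hasCompactSupport
          (grad_sq_hcs u huc)).integrableOn
      refine setIntegral_mono_on hgi hint (Hplus_measurable h0) ?_
      intro z hz
      have hz' : 0 < xN N h0 z := hz
      calc ‖gradient u z‖ ^ 2 = 1 * ‖gradient u z‖ ^ 2 := (one_mul _).symm
        _ ≤ ρ (xN N h0 z) * ‖gradient u z‖ ^ 2 :=
          mul_le_mul_of_nonneg_right (hρ_ge1 _ hz'.le) (by positivity)
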